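/- A generalized dicyclic 2-group Dic_{2^n}(A) satisfies α(Dic_{2^n}(A)) = 3/4 if and only if A ≅ (Z/2)^{n-1}, in which case Dic_{2^n}(A) ≅ (Z/2)^{n-2} × Z/4. -/

import Mathlib

/-- `α(G) = |L₁(G)| / |G|`, where `L₁(G)` is the set of cyclic subgroups of `G`. -/
noncomputable def alpha (G : Type*) [Group G] : ℚ :=
  (Nat.card {H : Subgroup G // IsCyclic H} : ℚ) / (Nat.card G : ℚ)

private lemma zpowers_isCyclic' {X : Type*} [Group X] (x : X) :
    IsCyclic (Subgroup.zpowers x) := by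
  refine ⟨⟨⟨x, Subgroup.mem_zpowers x⟩, ?_⟩⟩
  rintro ⟨y, hy⟩
  obtain ⟨k, hk⟩ := Subgroup.mem_zpowers_iff.mp hy
  exact Subgroup.mem_zpowers_iff.mpr ⟨k, by apply Subtype.ext; simpa using hk⟩

private lemma zpowers_surjective' (X : Type*) [Group X] :
    Function.Surjective (fun x : X => (⟨Subgroup.zpowers x, zpowers_isCyclic' x⟩ :
      {H : Subgroup X // IsCyclic H})) := by
  rintro ⟨H, hH⟩
  obtain ⟨g, hg⟩ := @IsCyclic.exists_generator H _ hH
  refine ⟨(g : X), Subtype.ext ?_⟩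
  apply le_antisymm
  · exact Subgroup.zpowers_le.mpr g.2
  · intro x hx
    obtain ⟨k, hk⟩ := Subgroup.mem_zpowers_iff.mp (hg ⟨x, hx⟩)
    exact Subgroup.mem_zpowers_iff.mpr
      ⟨k, by have := congrArg Subtype.val hk; simpa using this⟩

private lemma zpow_of_sq_eq_one' {X : Type*} [Group X] {x : X} (h : x ^ 2 = 1) (k : ℤ) :
    x ^ k = 1 ∨ x ^ k = x := by
  have h2 : x ^ (2 : ℤ) = 1 := by exact_mod_cast h
  have hmod : x ^ k = x ^ (k % 2) := by
    conv_lhs => rw [← Int.mul_ediv_add_emod k 2]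
    rw [zpow_add, zpow_mul, h2, one_zpow, one_mul]
  have hk : k % 2 = 0 ∨ k % 2 = 1 := by omega
  rcases hk with hk | hk <;> rw [hmod, hk] <;> simp

private lemma mem_zpowers_sq_eq_one' {X : Type*} [Group X] {x y : X} (h : x ^ 2 = 1)
    (hy : y ∈ Subgroup.zpowers x) : y = 1 ∨ y = x := by
  obtain ⟨k, hk⟩ := Subgroup.mem_zpowers_iff.mp hy
  rcases zpow_of_sq_eq_one' h k with h' | h'
  · left; rw [← hk, h']
  · right; rw [← hk, h']

private lemma card_cyclic_eq_card_iff' (X : Type*) [Group X] [Finite X] :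
    Nat.card {H : Subgroup X // IsCyclic H} = Nat.card X ↔ ∀ x : X, x ^ 2 = 1 := by
  haveI : Finite (Subgroup X) :=
    Finite.of_injective (fun H : Subgroup X => (H : Set X)) SetLike.coe_injective
  set f := fun x : X => (⟨Subgroup.zpowers x, zpowers_isCyclic' x⟩ :
    {H : Subgroup X // IsCyclic H}) with hf
  have hsurj : Function.Surjective f := zpowers_surjective' X
  constructor
  · intro hcard x
    have hbij : Function.Bijective f :=
      (Nat.bijective_iff_surjective_and_card f).mpr ⟨hsurj, hcard.symm⟩
    have hinv : x⁻¹ = x := by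
      apply hbij.1
      apply Subtype.ext
      show Subgroup.zpowers x⁻¹ = Subgroup.zpowers x
      apply le_antisymm
      · exact Subgroup.zpowers_le.mpr (Subgroup.inv_mem _ (Subgroup.mem_zpowers x))
      · exact Subgroup.zpowers_le.mpr (by
          have := Subgroup.inv_mem (Subgroup.zpowers x⁻¹) (Subgroup.mem_zpowers x⁻¹)
          simpa using this)
    rw [pow_two]
    nth_rewrite 1 [← hinv]
    exact inv_mul_cancel x
  · intro hexp
    have hinj : Function.Injective f := by
      intro a b hab
      have hab' : Subgroup.zpowers a = Subgroup.zpowers b := congrArg Subtype.val hab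
      have h1 : b = 1 ∨ b = a :=
        mem_zpowers_sq_eq_one' (hexp a) (hab' ▸ Subgroup.mem_zpowers b)
      have h2 : a = 1 ∨ a = b :=
        mem_zpowers_sq_eq_one' (hexp b) (hab'.symm ▸ Subgroup.mem_zpowers a)
      rcases h1 with rfl | rfl
      · rcases h2 with rfl | h2
        · rfl
        · exact h2
      · rfl
    exact (Nat.card_eq_of_bijective f ⟨hinj, hsurj⟩).symm

theorem stmt_14 (n : ℕ) (hn : 2 ≤ n) (G : Type*) [Group G] [Finite G]
    (A : Subgroup G) (hA : IsMulCommutative A) (hAcard : Nat.card A = 2 ^ (n - 1))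
    (hGcard : Nat.card G = 2 ^ n) (γ : G) (hγA : γ ∉ A)
    (hγ4 : γ ^ 4 = 1) (hγ2 : γ ^ 2 ∈ A) (hγ2ne : γ ^ 2 ≠ 1)
    (hconj : ∀ g ∈ A, γ * g * γ⁻¹ = g⁻¹) :
    (alpha G = 3 / 4 ↔ Nonempty (A ≃* Multiplicative (Fin (n - 1) → ZMod 2))) ∧
    (alpha G = 3 / 4 →
      Nonempty (G ≃* Multiplicative ((Fin (n - 2) → ZMod 2) × ZMod 4))) := by
  classical
  obtain ⟨m, rfl⟩ : ∃ m, n = m + 2 := ⟨n - 2, by omega⟩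
  have e1 : m + 2 - 1 = m + 1 := by omega
  have e2 : m + 2 - 2 = m := by omega
  rw [e1] at hAcard
  rw [e1, e2]
  haveI := hA
  letI : CommGroup ↥A := { (inferInstance : Group ↥A) with mul_comm := fun a b => hA.is_comm.comm a b }
  have hAfin : Nat.card ↥A = 2 ^ (m + 1) := hAcard
  have hGfin : Nat.card G = 2 ^ (m + 2) := hGcard
  -- basic commutation facts
  have hAc : ∀ a ∈ A, ∀ b ∈ A, a * b = b * a := fun a ha b hb => by
    simpa using congrArg Subtype.val (hA.is_comm.comm ⟨a, ha⟩ ⟨b, hb⟩)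
  have hswap : ∀ a ∈ A, γ * a = a⁻¹ * γ := fun a ha => by
    have h := hconj a ha
    calc γ * a = (γ * a * γ⁻¹) * γ := by group
    _ = a⁻¹ * γ := by rw [h]
  have hswap' : ∀ a ∈ A, a * γ = γ * a⁻¹ := fun a ha => by
    rw [hswap a⁻¹ (A.inv_mem ha), inv_inv]
  have hsq : ∀ a ∈ A, (γ * a) * (γ * a) = γ ^ 2 := fun a ha => by
    calc (γ * a) * (γ * a) = γ * (a * γ) * a := by group
    _ = γ * (γ * a⁻¹) * a := by rw [hswap' a ha]
    _ = γ * γ := by group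
    _ = γ ^ 2 := (pow_two γ).symm
  have hg24 : γ ^ 2 * γ ^ 2 = 1 := by
    rw [← pow_add]; norm_num [hγ4]
  -- coset decomposition
  have decomp : ∀ g : G, g ∈ A ∨ ∃ a ∈ A, g = γ * a := by
    set f : ↥A ⊕ ↥A → G := Sum.elim (fun a => (a : G)) (fun a => γ * a) with hf
    have hinj : Function.Injective f := by
      rintro (a | a) (b | b) hab <;>
        simp only [hf, Sum.elim_inl, Sum.elim_inr] at hab
      · exact congrArg Sum.inl (Subtype.ext hab)
      · exfalso
        apply hγA
        have : γ = (a : G) * (b : G)⁻¹ := by rw [hab]; group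
        rw [this]; exact A.mul_mem a.2 (A.inv_mem b.2)
      · exfalso
        apply hγA
        have : γ = (b : G) * (a : G)⁻¹ := by rw [← hab]; group
        rw [this]; exact A.mul_mem b.2 (A.inv_mem a.2)
      · exact congrArg Sum.inr (Subtype.ext (mul_left_cancel hab))
    have hcard : Nat.card (↥A ⊕ ↥A) = Nat.card G := by
      rw [Nat.card_sum, hAfin, hGfin]; ring
    have hsurj : Function.Surjective f :=
      ((Nat.bijective_iff_injective_and_card f).mpr ⟨hinj, hcard⟩).2
    intro g
    obtain ⟨(a | a), ha⟩ := hsurj g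
    · left; rw [← ha]; exact a.2
    · right; exact ⟨a, a.2, ha.symm⟩
  have hζ : ∀ a ∈ A, γ * a ∉ A := by
    intro a ha h
    apply hγA
    have : γ = (γ * a) * a⁻¹ := by group
    rw [this]; exact A.mul_mem h (A.inv_mem ha)
  have hsq' : ∀ a ∈ A, (γ * a) ^ 2 = γ ^ 2 := fun a ha => by
    rw [pow_two]; exact hsq a ha
  have hord4 : ∀ a ∈ A, (γ * a) ^ 4 = 1 := fun a ha => by
    have h : (γ * a) ^ 4 = ((γ * a) ^ 2) ^ 2 := by rw [← pow_mul]
    rw [h, hsq' a ha, ← pow_mul]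
    norm_num [hγ4]
  have hc2 : ∀ b ∈ A, γ ^ 2 * b = b * γ ^ 2 := fun b hb => hAc _ hγ2 b hb
  have hcen : ∀ a ∈ A, γ ^ 2 * (γ * a) = (γ * a) * γ ^ 2 := by
    intro a ha
    calc γ ^ 2 * (γ * a) = γ * (γ ^ 2 * a) := by group
    _ = γ * (a * γ ^ 2) := by rw [hc2 a ha]
    _ = (γ * a) * γ ^ 2 := by group
  -- membership in zpowers (γ * a)
  have hmem : ∀ a ∈ A, ∀ x : G, x ∈ Subgroup.zpowers (γ * a) ↔
      (x = 1 ∨ x = γ ^ 2 ∨ x = γ * a ∨ x = γ * a * γ ^ 2) := by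
    intro a ha x
    have h2n : (γ * a) ^ (2 : ℤ) = γ ^ 2 := by
      rw [show (2 : ℤ) = ((2 : ℕ) : ℤ) from rfl, zpow_natCast]; exact hsq' a ha
    constructor
    · intro hx
      obtain ⟨k, hk⟩ := Subgroup.mem_zpowers_iff.mp hx
      have h4 : (γ * a) ^ (4 : ℤ) = 1 := by
        rw [show (4 : ℤ) = ((4 : ℕ) : ℤ) from rfl, zpow_natCast]; exact hord4 a ha
      have hx4 : (γ * a) ^ k = (γ * a) ^ (k % 4) := by
        conv_lhs => rw [← Int.mul_ediv_add_emod k 4]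
        rw [zpow_add, zpow_mul, h4, one_zpow, one_mul]
      have hcases : k % 4 = 0 ∨ k % 4 = 1 ∨ k % 4 = 2 ∨ k % 4 = 3 := by omega
      rcases hcases with h | h | h | h <;> rw [← hk, hx4, h]
      · left; simp
      · right; right; left; simp
      · right; left; exact h2n
      · right; right; right
        have h3 : (γ * a) ^ (3 : ℤ) = (γ * a) ^ (2 : ℤ) * (γ * a) := by
          rw [show (3 : ℤ) = 2 + 1 from rfl, zpow_add]; simp
        rw [h3, h2n, hcen a ha]
    · rintro (rfl | rfl | rfl | rfl)
      · exact one_mem _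
      · exact Subgroup.mem_zpowers_iff.mpr ⟨2, h2n⟩
      · exact Subgroup.mem_zpowers _
      · exact mul_mem (Subgroup.mem_zpowers _) (Subgroup.mem_zpowers_iff.mpr ⟨2, h2n⟩)
  have hzeq : ∀ a ∈ A, Subgroup.zpowers (γ * (a * γ ^ 2)) = Subgroup.zpowers (γ * a) := by
    intro a ha
    have ha2 : a * γ ^ 2 ∈ A := A.mul_mem ha hγ2
    apply le_antisymm
    · rw [Subgroup.zpowers_le]
      exact (hmem a ha _).mpr (Or.inr (Or.inr (Or.inr (by rw [mul_assoc]))))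
    · rw [Subgroup.zpowers_le]
      have hback : γ * a = γ * (a * γ ^ 2) * γ ^ 2 := by
        rw [mul_assoc, mul_assoc, hg24, mul_one]
      rw [hback]
      exact (hmem _ ha2 _).mpr (Or.inr (Or.inr (Or.inr rfl)))
  -- set up the counting
  haveI : Finite (Subgroup G) :=
    Finite.of_injective (fun H : Subgroup G => (H : Set G)) SetLike.coe_injective
  set S := {H : Subgroup G // IsCyclic H} with hS
  set p : S → Prop := fun H => H.1 ≤ A with hp
  have hsplit : Nat.card S = Nat.card {H : S // p H} + Nat.card {H : S // ¬ p H} := by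
    rw [← Nat.card_sum]
    exact (Nat.card_congr (Equiv.sumCompl p)).symm
  -- part 1 : cyclic subgroups inside A
  have e1' : {H : S // p H} ≃ {K : Subgroup ↥A // IsCyclic K} :=
    { toFun := fun H => ⟨H.1.1.subgroupOf A, by
        haveI := H.1.2
        exact isCyclic_of_surjective
          (Subgroup.subgroupOfEquivOfLe (show H.1.1 ≤ A from H.2)).symm
          (MulEquiv.surjective _)⟩
      invFun := fun K => ⟨⟨K.1.map A.subtype, by
        haveI := K.2
        exact isCyclic_of_surjective
          (K.1.equivMapOfInjective A.subtype A.subtype_injective)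
          (MulEquiv.surjective _)⟩, Subgroup.map_subtype_le K.1⟩
      left_inv := fun H => by
        apply Subtype.ext; apply Subtype.ext
        show (H.1.1.subgroupOf A).map A.subtype = H.1.1
        rw [Subgroup.subgroupOf_map_subtype]
        exact inf_eq_left.mpr (show H.1.1 ≤ A from H.2)
      right_inv := fun K => by
        apply Subtype.ext
        show ((K.1.map A.subtype).subgroupOf A) = K.1
        exact Subgroup.comap_map_eq_self_of_injective A.subtype_injective K.1 }
  -- part 2 : cyclic subgroups not inside A
  set g2 : ↥A := ⟨γ ^ 2, hγ2⟩ with hg2def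
  have hg2sq : g2 * g2 = 1 := Subtype.ext (by simpa using hg24)
  have hg2ne1 : g2 ≠ 1 := fun h => hγ2ne (congrArg Subtype.val h)
  set Z' : Subgroup ↥A := Subgroup.zpowers g2 with hZ'
  have hZ'card : Nat.card Z' = 2 := by
    rw [Nat.card_zpowers]
    exact orderOf_eq_prime (by rw [pow_two]; exact hg2sq) hg2ne1
  set f2 : ↥A → {H : S // ¬ p H} := fun a =>
    ⟨⟨Subgroup.zpowers (γ * a), zpowers_isCyclic' _⟩,
      fun hle => hζ a a.2 (hle (Subgroup.mem_zpowers _))⟩ with hf2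
  have hf2resp : ∀ a b : ↥A, (QuotientGroup.leftRel Z') a b → f2 a = f2 b := by
    intro a b hab
    rw [QuotientGroup.leftRel_apply] at hab
    rcases mem_zpowers_sq_eq_one' (by rw [pow_two]; exact hg2sq) hab with h | h
    · have hba : b = a := by
        have := congrArg (fun z => a * z) h
        simpa [mul_assoc] using this
      rw [hba]
    · have hb : (b : G) = (a : G) * γ ^ 2 := by
        have := congrArg (fun z => (a : G) * z) (congrArg Subtype.val h)
        simpa [mul_assoc, hg2def] using this
      apply Subtype.ext; apply Subtype.ext
      show Subgroup.zpowers (γ * (a : G)) = Subgroup.zpowers (γ * (b : G))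
      rw [hb]
      exact (hzeq (a : G) a.2).symm
  set F : ↥A ⧸ Z' → {H : S // ¬ p H} := Quotient.lift f2 hf2resp with hF
  have hFbij : Function.Bijective F := by
    constructor
    · intro x y
      refine Quotient.inductionOn₂ x y ?_
      intro a b hab
      have heq : Subgroup.zpowers (γ * (a : G)) = Subgroup.zpowers (γ * (b : G)) :=
        congrArg (fun z : {H : S // ¬ p H} => z.1.1) hab
      have hbmem : γ * (b : G) ∈ Subgroup.zpowers (γ * (a : G)) :=
        heq ▸ Subgroup.mem_zpowers _
      rcases (hmem (a : G) a.2 _).mp hbmem with h | h | h | h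
      · exact absurd (h ▸ one_mem A) (hζ (b : G) b.2)
      · exact absurd (h ▸ hγ2) (hζ (b : G) b.2)
      · have hba : a = b := Subtype.ext (mul_left_cancel h).symm
        rw [hba]
      · apply Quotient.sound
        apply QuotientGroup.leftRel_apply.mpr
        have hab' : a⁻¹ * b = g2 := by
          apply Subtype.ext
          have hb : (b : G) = (a : G) * γ ^ 2 := by
            have := congrArg (fun z => γ⁻¹ * z) h
            simpa [← mul_assoc] using this
          show ((a : G))⁻¹ * (b : G) = γ ^ 2
          rw [hb, ← mul_assoc, inv_mul_cancel, one_mul]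
        rw [hab']
        exact Subgroup.mem_zpowers _
    · intro y
      obtain ⟨x, hx⟩ := zpowers_surjective' G ⟨y.1.1, y.1.2⟩
      have hxH : Subgroup.zpowers x = y.1.1 := congrArg Subtype.val hx
      have hxA : x ∉ A := by
        intro hxA
        exact y.2 (show (y.1.1 : Subgroup G) ≤ A by
          rw [← hxH]; exact Subgroup.zpowers_le.mpr hxA)
      rcases decomp x with h | ⟨a, ha, hxe⟩
      · exact absurd h hxA
      · refine ⟨QuotientGroup.mk ⟨a, ha⟩, ?_⟩
        apply Subtype.ext; apply Subtype.ext
        show Subgroup.zpowers (γ * a) = y.1.1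
        rw [← hxe]; exact hxH
  have hq : Nat.card (↥A ⧸ Z') * 2 = 2 ^ (m + 1) := by
    have h := Subgroup.card_eq_card_quotient_mul_card_subgroup Z'
    rw [hZ'card, hAfin] at h
    omega
  have hpart2 : Nat.card {H : S // ¬ p H} = 2 ^ m := by
    rw [← Nat.card_eq_of_bijective F hFbij]
    have h1 : (2 : ℕ) ^ (m + 1) = 2 ^ m * 2 := by ring
    omega
  have hpart1 : Nat.card {H : S // p H} = Nat.card {K : Subgroup ↥A // IsCyclic K} :=
    Nat.card_congr e1'
  have hcount := card_cyclic_eq_card_iff' ↥A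
  rw [hAfin] at hcount
  have htot : Nat.card S = Nat.card {K : Subgroup ↥A // IsCyclic K} + 2 ^ m := by
    rw [hsplit, hpart1, hpart2]
  -- the alpha criterion
  have halpha : alpha G = 3 / 4 ↔ (∀ x : ↥A, x ^ 2 = 1) := by
    rw [← hcount]
    unfold alpha
    rw [← hS, htot, hGfin]
    rw [div_eq_div_iff (by positivity) (by norm_num)]
    constructor
    · intro h
      have h' : (Nat.card {K : Subgroup ↥A // IsCyclic K} + 2 ^ m) * 4 = 3 * 2 ^ (m + 2) := by
        exact_mod_cast h
      have h2 : (2 : ℕ) ^ (m + 2) = 2 ^ m * 4 := by ring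
      have h1 : (2 : ℕ) ^ (m + 1) = 2 ^ m * 2 := by ring
      omega
    · intro h
      rw [h]
      push_cast
      ring
  -- (b) : exponent 2 gives the elementary abelian structure on A
  have hb : (∀ x : ↥A, x ^ 2 = 1) →
      Nonempty (↥A ≃* Multiplicative (Fin (m + 1) → ZMod 2)) := by
    intro hE
    letI : Module (ZMod 2) (Additive ↥A) := AddCommGroup.zmodModule (by
      intro x
      refine Additive.toMul.injective ?_
      simpa using hE (Additive.toMul x))
    haveI : Module.Finite (ZMod 2) (Additive ↥A) := Module.Finite.of_finite
    haveI : Fintype (Additive ↥A) := Fintype.ofFinite _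
    have hcard2 : Fintype.card (Additive ↥A) = 2 ^ Module.finrank (ZMod 2) (Additive ↥A) := by
      have h := Module.card_eq_pow_finrank (K := ZMod 2) (V := Additive ↥A)
      rwa [ZMod.card] at h
    have hcardA' : Fintype.card (Additive ↥A) = 2 ^ (m + 1) := by
      rw [← Nat.card_eq_fintype_card]
      exact (Nat.card_congr Additive.toMul).trans hAfin
    have hpow : (2 : ℕ) ^ Module.finrank (ZMod 2) (Additive ↥A) = 2 ^ (m + 1) := by
      rw [← hcard2, hcardA']
    have hrank : Module.finrank (ZMod 2) (Additive ↥A) = m + 1 :=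
      Nat.pow_right_injective (le_refl 2) hpow
    exact ⟨AddEquiv.toMultiplicativeRight
      ((Module.finBasisOfFinrankEq (ZMod 2) (Additive ↥A) hrank).equivFun.toAddEquiv)⟩
  -- (c) : the elementary abelian structure forces exponent 2
  have hc : Nonempty (↥A ≃* Multiplicative (Fin (m + 1) → ZMod 2)) →
      (∀ x : ↥A, x ^ 2 = 1) := by
    rintro ⟨f⟩ x
    apply f.injective
    rw [map_pow, map_one]
    have h2 : ∀ a : ZMod 2, a + a = 0 := by decide
    refine Multiplicative.toAdd.injective ?_
    rw [toAdd_pow, toAdd_one, two_nsmul]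
    exact funext fun i => h2 _
  -- (d) : structure of G
  have hd : (∀ x : ↥A, x ^ 2 = 1) →
      Nonempty (G ≃* Multiplicative ((Fin m → ZMod 2) × ZMod 4)) := by
    intro hE
    have hinvA : ∀ a ∈ A, a⁻¹ = a := by
      intro a ha
      have h := hE ⟨a, ha⟩
      rw [pow_two] at h
      have h' : a * a = 1 := by simpa using congrArg Subtype.val h
      exact inv_eq_of_mul_eq_one_right h'
    have hcγ : ∀ a ∈ A, γ * a = a * γ := fun a ha => by
      rw [hswap a ha, hinvA a ha]
    have hmulcomm : ∀ g h : G, g * h = h * g := by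
      intro g h
      rcases decomp g with hg | ⟨a, ha, rfl⟩ <;> rcases decomp h with hh | ⟨b, hb, rfl⟩
      · exact hAc g hg h hh
      · calc g * (γ * b) = (g * γ) * b := by group
        _ = (γ * g) * b := by rw [hcγ g hg]
        _ = γ * (g * b) := by group
        _ = γ * (b * g) := by rw [hAc g hg b hb]
        _ = (γ * b) * g := by group
      · calc (γ * a) * h = γ * (a * h) := by group
        _ = γ * (h * a) := by rw [hAc a ha h hh]
        _ = (γ * h) * a := by group
        _ = (h * γ) * a := by rw [hcγ h hh]
        _ = h * (γ * a) := by group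
      · calc (γ * a) * (γ * b) = γ * ((a * γ) * b) := by group
        _ = γ * ((γ * a) * b) := by rw [← hcγ a ha]
        _ = (γ * γ) * (a * b) := by group
        _ = (γ * γ) * (b * a) := by rw [hAc a ha b hb]
        _ = γ * ((γ * b) * a) := by group
        _ = γ * ((b * γ) * a) := by rw [hcγ b hb]
        _ = (γ * b) * (γ * a) := by group
    letI : CommGroup G := { (inferInstance : Group G) with mul_comm := hmulcomm }
    letI : Module (ZMod 2) (Additive ↥A) := AddCommGroup.zmodModule (by
      intro x
      refine Additive.toMul.injective ?_
      simpa using hE (Additive.toMul x))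
    haveI : Module.Finite (ZMod 2) (Additive ↥A) := Module.Finite.of_finite
    haveI : Fintype (Additive ↥A) := Fintype.ofFinite _
    have hcard2 : Fintype.card (Additive ↥A) = 2 ^ Module.finrank (ZMod 2) (Additive ↥A) := by
      have h := Module.card_eq_pow_finrank (K := ZMod 2) (V := Additive ↥A)
      rwa [ZMod.card] at h
    have hcardA' : Fintype.card (Additive ↥A) = 2 ^ (m + 1) := by
      rw [← Nat.card_eq_fintype_card]
      exact (Nat.card_congr Additive.toMul).trans hAfin
    have hpow : (2 : ℕ) ^ Module.finrank (ZMod 2) (Additive ↥A) = 2 ^ (m + 1) := by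
      rw [← hcard2, hcardA']
    have hrank : Module.finrank (ZMod 2) (Additive ↥A) = m + 1 :=
      Nat.pow_right_injective (le_refl 2) hpow
    set v : Additive ↥A := Additive.ofMul g2 with hv
    have hvne : v ≠ 0 := fun h => hg2ne1 (by simpa [hv] using h)
    set L : Submodule (ZMod 2) (Additive ↥A) := Submodule.span (ZMod 2) {v} with hL
    obtain ⟨W, hWcompl⟩ := Submodule.exists_isCompl L
    have hrankW : Module.finrank (ZMod 2) W = m := by
      have h1 := Submodule.finrank_add_eq_of_isCompl hWcompl
      rw [hL, finrank_span_singleton hvne, hrank] at h1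
      omega
    set eW := (Module.finBasisOfFinrankEq (ZMod 2) W hrankW).equivFun with heW
    set j : W →+ Additive G :=
      (MonoidHom.toAdditive A.subtype).comp (W.subtype.toAddMonoidHom) with hj
    set φ₁ : (Fin m → ZMod 2) →+ Additive G :=
      j.comp (eW.symm.toLinearMap.toAddMonoidHom) with hφ₁
    have h4γ : (zmultiplesHom (Additive G) (Additive.ofMul γ)) ((4 : ℕ) : ℤ) = 0 := by
      show ((4 : ℕ) : ℤ) • Additive.ofMul γ = 0
      have h4 : γ ^ ((4 : ℕ) : ℤ) = 1 := by rw [zpow_natCast]; exact hγ4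
      rw [← ofMul_zpow, h4]
      rfl
    set φ₂ : ZMod 4 →+ Additive G :=
      ZMod.lift 4 ⟨zmultiplesHom (Additive G) (Additive.ofMul γ), h4γ⟩ with hφ₂
    have hφ₂val : ∀ k : ZMod 4, Additive.toMul (φ₂ k) = γ ^ k.val := by
      intro k
      have hk : ((k.val : ℤ) : ZMod 4) = k := by
        push_cast
        exact ZMod.natCast_rightInverse k
      conv_lhs => rw [← hk]
      rw [hφ₂, ZMod.lift_coe]
      show Additive.toMul ((k.val : ℤ) • Additive.ofMul γ) = γ ^ k.val
      rw [← ofMul_zpow, zpow_natCast]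
      simp
    set Φ := φ₁.coprod φ₂ with hΦ
    have hΦinj : Function.Injective Φ := by
      rw [injective_iff_map_eq_zero]
      rintro ⟨w, k⟩ h
      set u : W := eW.symm w with hu
      set a : ↥A := Additive.toMul ((u : Additive ↥A)) with ha
      have hφ₁w : Additive.toMul (φ₁ w) = ((a : ↥A) : G) := rfl
      have h' : ((a : ↥A) : G) * γ ^ k.val = 1 := by
        have h0 := congrArg Additive.toMul h
        rw [hΦ, AddMonoidHom.coprod_apply, toMul_add, hφ₂val, hφ₁w] at h0
        simpa using h0
      have hklt : k.val < 4 := ZMod.val_lt k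
      have hcases : k.val = 0 ∨ k.val = 1 ∨ k.val = 2 ∨ k.val = 3 := by omega
      rcases hcases with hk | hk | hk | hk
      · rw [hk, pow_zero, mul_one] at h'
        have ha1 : a = 1 := OneMemClass.coe_eq_one.mp h'
        have hu0 : u = 0 := by
          apply Submodule.coe_eq_zero.mp
          have : Additive.toMul ((u : Additive ↥A)) = 1 := ha1
          simpa using Additive.toMul.injective (by simpa using this : Additive.toMul ((u : Additive ↥A)) = Additive.toMul 0)
        have hw0 : w = 0 := (LinearEquiv.map_eq_zero_iff eW.symm).mp hu0
        have hk0 : k = 0 := (ZMod.val_eq_zero k).mp hk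
        rw [hw0, hk0]
        rfl
      · exfalso
        rw [hk, pow_one] at h'
        apply hγA
        have hγeq : γ = ((a : ↥A) : G)⁻¹ := eq_inv_of_mul_eq_one_right h'
        rw [hγeq]
        exact A.inv_mem (a : ↥A).2
      · exfalso
        rw [hk] at h'
        have haγ2 : ((a : ↥A) : G) = γ ^ 2 := by
          have h1 : ((a : ↥A) : G) = (γ ^ 2)⁻¹ := eq_inv_of_mul_eq_one_left h'
          rw [h1, inv_eq_of_mul_eq_one_right hg24]
        have hag2 : a = g2 := Subtype.ext haγ2
        have huv : (u : Additive ↥A) = v := by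
          rw [hv]
          have : Additive.toMul ((u : Additive ↥A)) = g2 := hag2
          exact Additive.toMul.injective (by simpa using this)
        have hvW : v ∈ W := huv ▸ u.2
        have hvL : v ∈ L := Submodule.mem_span_singleton_self v
        have hv0 : v = 0 := by
          have := hWcompl.disjoint
          rw [Submodule.disjoint_def] at this
          exact this v hvL hvW
        exact hvne hv0
      · exfalso
        rw [hk] at h'
        apply hγA
        have hγ3 : γ ^ 3 ∈ A := by
          have h1 : γ ^ 3 = ((a : ↥A) : G)⁻¹ := eq_inv_of_mul_eq_one_right h'
          rw [h1]
          exact A.inv_mem (a : ↥A).2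
        have : γ = (γ ^ 2)⁻¹ * γ ^ 3 := by group
        rw [this]
        exact A.mul_mem (A.inv_mem hγ2) hγ3
    haveI : Fintype G := Fintype.ofFinite G
    have hcardeq : Nat.card ((Fin m → ZMod 2) × ZMod 4) = Nat.card (Additive G) := by
      rw [Nat.card_eq_fintype_card, Nat.card_eq_fintype_card, Fintype.card_prod,
        Fintype.card_fun, ZMod.card, ZMod.card, Fintype.card_fin]
      have hG' : Fintype.card (Additive G) = 2 ^ (m + 2) := by
        rw [← Nat.card_eq_fintype_card]
        exact (Nat.card_congr Additive.toMul).trans hGfin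
      rw [hG']
      ring
    have hbij : Function.Bijective Φ :=
      (Nat.bijective_iff_injective_and_card Φ).mpr ⟨hΦinj, hcardeq⟩
    exact ⟨AddEquiv.toMultiplicativeRight ((AddEquiv.ofBijective Φ hbij).symm)⟩
  exact ⟨⟨fun hα => hb (halpha.mp hα), fun h => halpha.mpr (hc h)⟩,
    fun hα => hd (halpha.mp hα)⟩
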